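/- arXiv:2512.12890 — 2 statements merged into one kernel-verified Lean document; each statement's English description precedes it below -/
import Mathlib

section
/- Let L_n be the multiple Legendre polynomials and S_n the Sorokin-type rational functions (both as defined recursively above). Then for all z ≠ 1 and w = z/(z-1) with |w| < 1: (1-z) · L_n(p_1,q_1;…;p_n,q_n;z) = S_n(p_1,q_1;…;p_n,q_n;w). -/
open scoped Nat

/-- Auxiliary recursion for multiple Legendre polynomials, peeling the
outermost (i.e. last) index pair from the head of the list. -/
noncomputable def LegAux : List (ℕ × ℕ) → ℂ → ℂ
  | [], _ => 1
  | (p, q) :: rest, z =>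
      z ^ q * (1 - z) ^ p *
        ((1 / ((p + q)! : ℂ)) *
          iteratedDeriv (p + q) (fun x : ℂ => x ^ p * (1 - x) ^ q * LegAux rest x) z)

/-- The multiple Legendre polynomial `L_n(p_1,q_1;…;p_n,q_n;z)`, where the list
is `[(p_1,q_1),…,(p_n,q_n)]`: recursively, `L_0 = 1` and
`L_n = z^{q_n}(1-z)^{p_n} D_{p_n+q_n}(z^{p_n}(1-z)^{q_n} L_{n-1})`. -/
noncomputable def Leg (L : List (ℕ × ℕ)) (z : ℂ) : ℂ := LegAux L.reverse z

/-- Auxiliary recursion for Sorokin-type rational functions, peeling the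
outermost (i.e. last) index pair from the head of the list. -/
noncomputable def SorAux : List (ℕ × ℕ) → ℂ → ℂ
  | [], w => 1 / (1 - w)
  | (p, q) :: rest, w =>
      w ^ q * ((1 / ((p + q)! : ℂ)) *
        iteratedDeriv (p + q) (fun x : ℂ => x ^ p * SorAux rest x) w)

/-- The Sorokin-type rational function `S_n(p_1,q_1;…;p_n,q_n;w)`:
`S_0(w) = 1/(1-w)` and `S_n = w^{q_n} D_{p_n+q_n}(w^{p_n} S_{n-1})`. -/
noncomputable def Sor (L : List (ℕ × ℕ)) (w : ℂ) : ℂ := SorAux L.reverse w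

section helperLemmas
open Topology

lemma diff_iter {f : ℂ → ℂ} (hf : Differentiable ℂ f) (m : ℕ) :
    Differentiable ℂ (iteratedDeriv m f) :=
  (hf.contDiff (n := ⊤)).differentiable_iteratedDeriv m (by exact_mod_cast WithTop.coe_lt_top _)

lemma diff_deriv {f : ℂ → ℂ} (hf : Differentiable ℂ f) :
    Differentiable ℂ (deriv f) := by
  have := diff_iter hf 1
  rwa [iteratedDeriv_one] at this

lemma iterDeriv_add {f g : ℂ → ℂ} (hf : Differentiable ℂ f) (hg : Differentiable ℂ g)
    (n : ℕ) (x : ℂ) :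
    iteratedDeriv n (fun y => f y + g y) x = iteratedDeriv n f x + iteratedDeriv n g x := by
  simp only [← iteratedDerivWithin_univ]
  exact iteratedDerivWithin_add (Set.mem_univ x) uniqueDiffOn_univ
    (hf.contDiff.contDiffWithinAt) (hg.contDiff.contDiffWithinAt)

lemma iterDeriv_one_sub_mul {h : ℂ → ℂ} (hh : Differentiable ℂ h) (n : ℕ) (u : ℂ) :
    iteratedDeriv n (fun y => (1 - y) * h y) u
      = (1 - u) * iteratedDeriv n h u - n * iteratedDeriv (n - 1) h u := by
  induction n generalizing h with
  | zero => simp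
  | succ n ih =>
    rw [iteratedDeriv_succ']
    have hd : deriv (fun y => (1 - y) * h y) = fun y => -h y + (1 - y) * deriv h y := by
      funext y
      have h1 : HasDerivAt (fun y : ℂ => 1 - y) (-1) y := (hasDerivAt_id y).const_sub 1
      have h2 : HasDerivAt h (deriv h y) y := (hh y).hasDerivAt
      have := (h1.mul h2).deriv
      rw [show (fun y => (1 - y) * h y) = (fun y : ℂ => 1 - y) * h from rfl, this]; ring
    rw [hd]
    have hstep : iteratedDeriv n (fun y => -h y + (1 - y) * deriv h y) u
        = iteratedDeriv n (fun y => -h y) u + iteratedDeriv n (fun y => (1 - y) * deriv h y) u :=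
      iterDeriv_add hh.neg ((differentiable_const 1 |>.sub differentiable_id).mul (diff_deriv hh)) n u
    rw [hstep, iteratedDeriv_fun_neg, ih (diff_deriv hh)]
    rw [← iteratedDeriv_succ']
    rcases n with _ | n
    · simp; ring
    · have : iteratedDeriv (n + 1 - 1) (deriv h) u = iteratedDeriv (n + 1) h u := by
        simp [← iteratedDeriv_succ']
      rw [this]
      push_cast
      ring

lemma one_sub_phi {x : ℂ} (hx : x ≠ 1) : 1 - x / (x - 1) = (1 - x)⁻¹ := by
  have h1 : x - 1 ≠ 0 := sub_ne_zero.2 hx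
  have h2 : (1 : ℂ) - x ≠ 0 := sub_ne_zero.2 (Ne.symm hx)
  field_simp
  ring

lemma phi_ne_one {x : ℂ} (hx : x ≠ 1) : x / (x - 1) ≠ 1 := by
  have h1 : x - 1 ≠ 0 := sub_ne_zero.2 hx
  intro h
  rw [div_eq_one_iff_eq h1] at h
  exact one_ne_zero (α := ℂ) (by linear_combination h)

lemma phi_phi {x : ℂ} (hx : x ≠ 1) : (x / (x - 1)) / ((x / (x - 1)) - 1) = x := by
  have h1 : x - 1 ≠ 0 := sub_ne_zero.2 hx
  have h2 : x / (x - 1) - 1 = 1 / (x - 1) := by field_simp; ring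
  rw [h2]
  field_simp

lemma keyA (m : ℕ) : ∀ (f : ℂ → ℂ), Differentiable ℂ f → ∀ w : ℂ, w ≠ 1 →
    iteratedDeriv m (fun x => (1 - x) ^ ((m : ℤ) - 1) * f (x / (x - 1))) w
      = (-1) ^ m * (1 - w) ^ (-(m : ℤ) - 1) * iteratedDeriv m f (w / (w - 1)) := by
  induction m with
  | zero =>
    intro f hf w hw
    simp only [iteratedDeriv_zero, Nat.cast_zero, zero_sub, neg_zero, pow_zero, one_mul]
  | succ m ih =>
    intro f hf w hw
    have h1w : (1 : ℂ) - w ≠ 0 := sub_ne_zero.2 (Ne.symm hw)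
    have hfd : Differentiable ℂ (deriv f) := diff_deriv hf
    -- the auxiliary function
    set G : ℂ → ℂ := fun u => (m : ℂ) * f u + (1 - u) * deriv f u with hG
    have hGd : Differentiable ℂ G :=
      (hf.const_mul _).add ((differentiable_const 1 |>.sub differentiable_id).mul hfd)
    -- simplify the exponent
    have hexp : ((((m : ℕ) + 1 : ℕ)) : ℤ) - 1 = (m : ℤ) := by push_cast; ring
    have hmain : (fun x : ℂ => (1 - x) ^ (((((m : ℕ) + 1 : ℕ)) : ℤ) - 1) * f (x / (x - 1)))
        = fun x : ℂ => (1 - x) ^ (m : ℕ) * f (x / (x - 1)) := by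
      funext x; rw [hexp, zpow_natCast]
    rw [hmain, iteratedDeriv_succ']
    -- the derivative computation, valid near w
    have hEv : (deriv fun x : ℂ => (1 - x) ^ (m : ℕ) * f (x / (x - 1)))
        =ᶠ[nhds w] fun x => -((1 - x) ^ ((m : ℤ) - 1) * G (x / (x - 1))) := by
      filter_upwards [isOpen_compl_singleton.mem_nhds (by exact hw : w ∈ ({1}ᶜ : Set ℂ))] with x hx
      have hx1 : x ≠ 1 := hx
      have hxs : x - 1 ≠ 0 := sub_ne_zero.2 hx1
      have h1x : (1 : ℂ) - x ≠ 0 := sub_ne_zero.2 (Ne.symm hx1)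
      have hφ : HasDerivAt (fun y : ℂ => y / (y - 1)) (-(((x - 1) ^ 2)⁻¹)) x := by
        have : HasDerivAt (fun y : ℂ => y / (y - 1)) _ x := (hasDerivAt_id x).div ((hasDerivAt_id x).sub_const 1) hxs
        convert this using 1
        simp only [id]
        field_simp
        ring
      have hA : HasDerivAt (fun y : ℂ => (1 - y) ^ (m : ℕ))
          ((m : ℂ) * (1 - x) ^ (m - 1 : ℕ) * (-1)) x :=
        ((hasDerivAt_id x).const_sub 1).pow m
      have hB : HasDerivAt (fun y : ℂ => f (y / (y - 1)))
          (deriv f (x / (x - 1)) * -(((x - 1) ^ 2)⁻¹)) x :=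
        ((hf _).hasDerivAt).comp x hφ
      rw [show (fun x : ℂ => (1 - x) ^ (m : ℕ) * f (x / (x - 1))) = (fun y : ℂ => (1 - y) ^ (m : ℕ)) * (fun y => f (y / (y - 1))) from rfl, (hA.mul hB).deriv]
      -- algebraic identity
      simp only [hG]
      rw [one_sub_phi hx1]
      rcases m with _ | k
      · simp only [Nat.cast_zero, pow_zero, CharP.cast_eq_zero, zero_mul, neg_zero,
          zero_add, one_mul, zero_sub, zpow_neg, zpow_one, mul_zero]
        rw [show (x - 1) ^ 2 = (1 - x) ^ 2 by ring, sq, mul_inv]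
        ring
      · have he2 : (((k + 1 : ℕ)) : ℤ) - 1 = ((k : ℕ) : ℤ) := by push_cast; ring
        rw [he2, zpow_natCast]
        rw [show (x - 1) ^ 2 = (1 - x) ^ 2 by ring]
        have hms : (k + 1 - 1 : ℕ) = k := rfl
        rw [hms]
        have hc : (1 - x) ^ (k + 1) * (((1 - x) ^ 2)⁻¹) = (1 - x) ^ k * (1 - x)⁻¹ := by
          field_simp
          ring
        linear_combination (-(deriv f (x / (x - 1)))) * hc
    rw [Filter.EventuallyEq.iteratedDeriv_eq m hEv, iteratedDeriv_fun_neg, ih G hGd w hw]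
    -- compute iteratedDeriv m G at w/(w-1)
    have hGder : iteratedDeriv m G (w / (w - 1))
        = (1 - w / (w - 1)) * iteratedDeriv (m + 1) f (w / (w - 1)) := by
      have h1 : iteratedDeriv m G (w / (w - 1))
          = iteratedDeriv m (fun y => (m : ℂ) * f y) (w / (w - 1))
            + iteratedDeriv m (fun y => (1 - y) * deriv f y) (w / (w - 1)) :=
        iterDeriv_add (hf.const_mul _)
          ((differentiable_const 1 |>.sub differentiable_id).mul hfd) m _
      have h2 : iteratedDeriv m (fun y => (m : ℂ) * f y) (w / (w - 1))
          = (m : ℂ) * iteratedDeriv m f (w / (w - 1)) := by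
        simp only [← iteratedDerivWithin_univ]
        exact iteratedDerivWithin_const_mul (Set.mem_univ _) uniqueDiffOn_univ _
          hf.contDiff.contDiffWithinAt
      rw [h1, h2, iterDeriv_one_sub_mul hfd m _, ← iteratedDeriv_succ']
      rcases m with _ | k
      · simp
      · have : iteratedDeriv (k + 1 - 1) (deriv f) (w / (w - 1))
            = iteratedDeriv (k + 1) f (w / (w - 1)) := by
          simp [← iteratedDeriv_succ']
        rw [this]
        ring
    rw [hGder, one_sub_phi hw]
    have hzp : (1 - w) ^ (-(((m + 1 : ℕ)) : ℤ) - 1)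
        = (1 - w) ^ (-(m : ℤ) - 1) * (1 - w)⁻¹ := by
      have he : (-(((m + 1 : ℕ)) : ℤ) - 1) = (-(m : ℤ) - 1) + (-1) := by push_cast; ring
      rw [he, zpow_add₀ h1w, zpow_neg_one]
    rw [hzp]
    ring
lemma iterDeriv_const_mul' {f : ℂ → ℂ} (hf : Differentiable ℂ f) (c : ℂ) (n : ℕ) (x : ℂ) :
    iteratedDeriv n (fun y => c * f y) x = c * iteratedDeriv n f x := by
  simp only [← iteratedDerivWithin_univ]
  exact iteratedDerivWithin_const_mul (Set.mem_univ _) uniqueDiffOn_univ _ hf.contDiff.contDiffWithinAt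

lemma legAux_diff : ∀ L : List (ℕ × ℕ), Differentiable ℂ (LegAux L) := by
  intro L
  induction L with
  | nil => simpa [LegAux] using differentiable_const (1 : ℂ)
  | cons pq rest ih =>
    obtain ⟨p, q⟩ := pq
    have hG : Differentiable ℂ (fun x : ℂ => x ^ p * (1 - x) ^ q * LegAux rest x) :=
      ((differentiable_pow p).mul (((differentiable_const 1).sub differentiable_id).pow q)).mul ih
    have hiter : Differentiable ℂ (iteratedDeriv (p + q)
        (fun x : ℂ => x ^ p * (1 - x) ^ q * LegAux rest x)) :=
      (hG.contDiff (n := ⊤)).differentiable_iteratedDeriv _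
        (by exact_mod_cast WithTop.coe_lt_top _)
    show Differentiable ℂ (LegAux ((p, q) :: rest))
    have : LegAux ((p, q) :: rest) = fun z =>
        z ^ q * (1 - z) ^ p * ((1 / ((p + q)! : ℂ)) *
          iteratedDeriv (p + q) (fun x : ℂ => x ^ p * (1 - x) ^ q * LegAux rest x) z) := rfl
    rw [this]
    exact ((differentiable_pow q).mul
      (((differentiable_const 1).sub differentiable_id).pow p)).mul (hiter.const_mul _)

lemma pointwise (p q : ℕ) (L : ℂ) {x : ℂ} (hx : x ≠ 1) :
    x ^ p * ((1 - x / (x - 1)) * L)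
      = (1 - x) ^ (((p + q : ℕ) : ℤ) - 1) *
        ((-1 : ℂ) ^ p * ((x / (x - 1)) ^ p * (1 - x / (x - 1)) ^ q * L)) := by
  have h1x : (1 : ℂ) - x ≠ 0 := sub_ne_zero.2 (Ne.symm hx)
  have hxs : x - 1 ≠ 0 := sub_ne_zero.2 hx
  rw [one_sub_phi hx]
  rw [show (((p + q : ℕ)) : ℤ) - 1 = (p : ℤ) + ((q : ℤ) + (-1)) by push_cast; ring,
    zpow_add₀ h1x, zpow_add₀ h1x, zpow_natCast, zpow_natCast, zpow_neg_one]
  have key1 : (1 - x) ^ p * ((-1 : ℂ)) ^ p * (x / (x - 1)) ^ p = x ^ p := by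
    rw [← mul_pow, ← mul_pow]
    congr 1
    field_simp
    ring
  have key2 : (1 - x) ^ q * ((1 - x)⁻¹) ^ q = 1 := by
    rw [← mul_pow, mul_inv_cancel₀ h1x, one_pow]
  linear_combination (-((1 - x) ^ q * ((1 - x)⁻¹) ^ q * (1 - x)⁻¹ * L)) * key1
    + (-(x ^ p * (1 - x)⁻¹ * L)) * key2

lemma main_aux : ∀ (L : List (ℕ × ℕ)) (z : ℂ), z ≠ 1 →
    (1 - z) * LegAux L z = SorAux L (z / (z - 1)) := by
  intro L
  induction L with
  | nil =>
    intro z hz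
    show (1 - z) * 1 = 1 / (1 - z / (z - 1))
    rw [one_sub_phi hz, one_div, inv_inv, mul_one]
  | cons pq rest ih =>
    obtain ⟨p, q⟩ := pq
    intro z hz
    have h1z : (1 : ℂ) - z ≠ 0 := sub_ne_zero.2 (Ne.symm hz)
    have hzs : z - 1 ≠ 0 := sub_ne_zero.2 hz
    have hw : z / (z - 1) ≠ 1 := phi_ne_one hz
    have hFd : Differentiable ℂ (fun x : ℂ => x ^ p * (1 - x) ^ q * LegAux rest x) :=
      ((differentiable_pow p).mul (((differentiable_const 1).sub differentiable_id).pow q)).mul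
        (legAux_diff rest)
    set F : ℂ → ℂ := fun x : ℂ => x ^ p * (1 - x) ^ q * LegAux rest x with hF
    set f₀ : ℂ → ℂ := fun y => (-1 : ℂ) ^ p * F y with hf₀
    have hf₀d : Differentiable ℂ f₀ := hFd.const_mul _
    -- the Sorokin integrand agrees with the transformed Legendre integrand near z/(z-1)
    have hEq : (fun x : ℂ => x ^ p * SorAux rest x)
        =ᶠ[nhds (z / (z - 1))] fun x => (1 - x) ^ (((p + q : ℕ) : ℤ) - 1) * f₀ (x / (x - 1)) := by
      filter_upwards [isOpen_compl_singleton.mem_nhds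
        (by exact hw : z / (z - 1) ∈ ({1}ᶜ : Set ℂ))] with x hx
      have hx1 : x ≠ 1 := hx
      have hSor : SorAux rest x = (1 - x / (x - 1)) * LegAux rest (x / (x - 1)) := by
        have h := ih (x / (x - 1)) (phi_ne_one hx1)
        rwa [phi_phi hx1, eq_comm] at h
      rw [hSor, hf₀, hF]
      exact pointwise p q (LegAux rest (x / (x - 1))) hx1
    have hunfoldS : SorAux ((p, q) :: rest) (z / (z - 1))
        = (z / (z - 1)) ^ q * ((1 / ((p + q)! : ℂ)) *
            iteratedDeriv (p + q) (fun x : ℂ => x ^ p * SorAux rest x) (z / (z - 1))) := rfl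
    have hunfoldL : LegAux ((p, q) :: rest) z
        = z ^ q * (1 - z) ^ p * ((1 / ((p + q)! : ℂ)) * iteratedDeriv (p + q) F z) := rfl
    rw [hunfoldS, hunfoldL]
    rw [Filter.EventuallyEq.iteratedDeriv_eq (p + q) hEq]
    rw [keyA (p + q) f₀ hf₀d (z / (z - 1)) hw, phi_phi hz]
    have hD0 : iteratedDeriv (p + q) f₀ z = (-1 : ℂ) ^ p * iteratedDeriv (p + q) F z :=
      iterDeriv_const_mul' hFd _ _ _
    rw [hD0, one_sub_phi hz]
    have hzp : ((1 - z)⁻¹ : ℂ) ^ (-((p + q : ℕ) : ℤ) - 1) = (1 - z) ^ (p + q + 1 : ℕ) := by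
      rw [inv_zpow', show (-(-((p + q : ℕ) : ℤ) - 1)) = (((p + q + 1 : ℕ)) : ℤ) by push_cast; ring,
        zpow_natCast]
    rw [hzp]
    set D := iteratedDeriv (p + q) F z with hD
    set c := (1 / ((p + q)! : ℂ)) with hc
    have e1 : (-1 : ℂ) ^ p * (-1 : ℂ) ^ p = 1 := by rw [← mul_pow]; norm_num
    have k1 : (z / (z - 1)) ^ q * ((-1 : ℂ) ^ q * (1 - z) ^ q) = z ^ q := by
      rw [← mul_pow, ← mul_pow]
      congr 1
      field_simp
      ring
    rw [show ((-1 : ℂ) ^ (p + q)) = (-1 : ℂ) ^ p * (-1 : ℂ) ^ q from pow_add _ _ _,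
      show ((1 - z) ^ (p + q + 1 : ℕ) : ℂ) = (1 - z) ^ p * (1 - z) ^ q * (1 - z) by
        rw [pow_succ, pow_add]]
    linear_combination
      (-(((z / (z - 1)) ^ q) * (-1 : ℂ) ^ q * (1 - z) ^ p * (1 - z) ^ q * (1 - z) * c * D)) * e1
      + (-((1 - z) ^ p * (1 - z) * c * D)) * k1

end helperLemmas

theorem one_sub_mul_Leg_eq_Sor (L : List (ℕ × ℕ)) (z w : ℂ) (hz : z ≠ 1)
    (hw : w = z / (z - 1)) (habs : ‖w‖ < 1) :
    (1 - z) * Leg L z = Sor L w := by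
  rw [hw, Leg, Sor]
  exact main_aux L.reverse z hz
end

section
/- For nonnegative integers p_1, q_1, p_2, q_2, the identity (p_1+q_1)!(p_2+q_2)! L_2(p_1,q_1;p_2,q_2;z) = (p_1+q_2)!(p_2+q_1)! L_2(p_1,q_2;p_2,q_1;z) holds, where L_2(p_1,q_1;p_2,q_2;z) = (-1)^{q_1} z^{q_2}(1-z)^{p_2} · (1/(p_2+q_2)!) d^{p_2+q_2}/dz^{p_2+q_2} [ z^{p_2+q_1}(1-z)^{p_1+q_2} ]. -/
open scoped Nat
open Polynomial Finset

private lemma iteratedDeriv_polyEval (P : Polynomial ℂ) (n : ℕ) :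
    iteratedDeriv n (fun x => P.eval x) = fun x => (Polynomial.derivative^[n] P).eval x := by
  induction n with
  | zero => simp
  | succ n ih =>
    rw [iteratedDeriv_succ, ih, Function.iterate_succ_apply']
    funext x
    exact Polynomial.deriv _

private lemma key (a b n : ℕ) (z : ℂ) :
    iteratedDeriv n (fun x : ℂ => x ^ a * (1 - x) ^ b) z =
      ∑ k ∈ Finset.range (n + 1),
        (n.choose k : ℂ) * (a.descFactorial k : ℂ) * (-1) ^ (n - k) *
          ((b.descFactorial (n - k)) : ℂ) * z ^ (a - k) * (1 - z) ^ (b - (n - k)) := by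
  have hfun : (fun x : ℂ => x ^ a * (1 - x) ^ b)
      = fun x => Polynomial.eval x ((1 - X : Polynomial ℂ) ^ b * X ^ a) := by
    funext x; simp [mul_comm]
  rw [hfun, show iteratedDeriv n (fun x => Polynomial.eval x ((1 - X : Polynomial ℂ) ^ b * X ^ a)) z
      = Polynomial.eval z (Polynomial.derivative^[n] ((1 - X : Polynomial ℂ) ^ b * X ^ a)) from
    congrFun (iteratedDeriv_polyEval _ n) z, Polynomial.iterate_derivative_mul,
    Polynomial.eval_finset_sum]
  refine Finset.sum_congr rfl fun k hk => ?_
  have h1 : ((1 - X : Polynomial ℂ) ^ b) = (X ^ b).comp (1 - X) := by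
    rw [Polynomial.X_pow_comp]
  rw [h1, Polynomial.iterate_derivative_comp_one_sub_X,
    Polynomial.iterate_derivative_X_pow_eq_natCast_mul,
    Polynomial.iterate_derivative_X_pow_eq_natCast_mul]
  simp only [smul_eq_mul, Polynomial.eval_mul, Polynomial.eval_pow, Polynomial.eval_comp,
    Polynomial.eval_natCast, Polynomial.eval_sub, Polynomial.eval_one, Polynomial.eval_X,
    Polynomial.eval_neg, Polynomial.eval_smul, nsmul_eq_mul, Nat.cast_id]
  ring

private lemma coeff_id (p₁ q₁ p₂ q₂ k : ℕ) (h1 : k ≤ p₂ + q₁) (h2 : k ≤ p₂ + q₂)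
    (h3 : p₂ ≤ p₁ + k) :
    (p₁ + q₁)! * ((p₂ + q₂).choose k) * ((p₂ + q₁).descFactorial k) *
        ((p₁ + q₂).descFactorial (p₂ + q₂ - k)) =
      (p₁ + q₂)! * ((p₂ + q₁).choose k) * ((p₂ + q₂).descFactorial k) *
        ((p₁ + q₁).descFactorial (p₂ + q₁ - k)) := by
  have hM : 0 < k ! * (p₂ + q₂ - k)! * (p₂ + q₁ - k)! * (p₁ + k - p₂)! := by positivity
  apply Nat.eq_of_mul_eq_mul_right hM
  have c1 := Nat.choose_mul_factorial_mul_factorial h2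
  have c2 := Nat.choose_mul_factorial_mul_factorial h1
  have d1 := Nat.factorial_mul_descFactorial h1
  have d2 := Nat.factorial_mul_descFactorial h2
  have d3 : (p₁ + k - p₂)! * (p₁ + q₂).descFactorial (p₂ + q₂ - k) = (p₁ + q₂)! := by
    rw [show p₁ + k - p₂ = (p₁ + q₂) - (p₂ + q₂ - k) by omega]
    exact Nat.factorial_mul_descFactorial (by omega)
  have d4 : (p₁ + k - p₂)! * (p₁ + q₁).descFactorial (p₂ + q₁ - k) = (p₁ + q₁)! := by
    rw [show p₁ + k - p₂ = (p₁ + q₁) - (p₂ + q₁ - k) by omega]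
    exact Nat.factorial_mul_descFactorial (by omega)
  trans ((p₁ + q₁)! * ((p₂ + q₂)! * ((p₂ + q₁)! * (p₁ + q₂)!)))
  · rw [← c1, ← d1, ← d3]; ring
  · rw [← c2, ← d2, ← d4]; ring

theorem Hata_Legendre_identity (p₁ q₁ p₂ q₂ : ℕ) (z : ℂ) :
    ((p₁ + q₁)! : ℂ) * ((p₂ + q₂)! : ℂ) *
        ((-1) ^ q₁ * z ^ q₂ * (1 - z) ^ p₂ *
          ((1 / ((p₂ + q₂)! : ℂ)) *
            iteratedDeriv (p₂ + q₂) (fun x : ℂ => x ^ (p₂ + q₁) * (1 - x) ^ (p₁ + q₂)) z)) =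
      ((p₁ + q₂)! : ℂ) * ((p₂ + q₁)! : ℂ) *
        ((-1) ^ q₂ * z ^ q₁ * (1 - z) ^ p₂ *
          ((1 / ((p₂ + q₁)! : ℂ)) *
            iteratedDeriv (p₂ + q₁) (fun x : ℂ => x ^ (p₂ + q₂) * (1 - x) ^ (p₁ + q₁)) z)) := by
  rw [key, key]
  have cancel : ∀ (m : ℕ) (A B S : ℂ),
      A * (m ! : ℂ) * (B * (1 / (m ! : ℂ) * S)) = A * (B * S) := by
    intro m A B S
    have h : ((m)! : ℂ) ≠ 0 := Nat.cast_ne_zero.mpr (Nat.factorial_ne_zero m)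
    field_simp
  rw [cancel, cancel]
  simp only [Finset.mul_sum]
  have ext : ∀ (f : ℕ → ℂ) (m N : ℕ), m ≤ N → (∀ k, m + 1 ≤ k → f k = 0) →
      ∑ k ∈ Finset.range (m + 1), f k = ∑ k ∈ Finset.range (N + 1), f k := by
    intro f m N h h0
    refine Finset.sum_subset (Finset.range_subset_range.mpr (by omega)) fun k hk hk' => ?_
    exact h0 k (by simpa using hk')
  rw [ext _ (p₂ + q₂) (p₂ + q₁ + q₂) (by omega) (fun k hk => by
      have : (p₂ + q₂).choose k = 0 := Nat.choose_eq_zero_of_lt (by omega)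
      simp [this]),
    ext _ (p₂ + q₁) (p₂ + q₁ + q₂) (by omega) (fun k hk => by
      have : (p₂ + q₁).choose k = 0 := Nat.choose_eq_zero_of_lt (by omega)
      simp [this])]
  refine Finset.sum_congr rfl fun k hk => ?_
  by_cases h1 : p₂ + q₁ < k
  · simp [Nat.choose_eq_zero_of_lt h1, Nat.descFactorial_eq_zero_iff_lt.mpr h1]
  by_cases h2 : p₂ + q₂ < k
  · simp [Nat.choose_eq_zero_of_lt h2, Nat.descFactorial_eq_zero_iff_lt.mpr h2]
  push_neg at h1 h2
  by_cases h3 : p₁ + k < p₂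
  · have e1 : p₁ + q₂ < p₂ + q₂ - k := by omega
    have e2 : p₁ + q₁ < p₂ + q₁ - k := by omega
    simp [Nat.descFactorial_eq_zero_iff_lt.mpr e1, Nat.descFactorial_eq_zero_iff_lt.mpr e2]
  push_neg at h3
  rw [show (p₁ + q₂) - (p₂ + q₂ - k) = p₁ + k - p₂ by omega,
    show (p₁ + q₁) - (p₂ + q₁ - k) = p₁ + k - p₂ by omega]
  have L : ((p₁ + q₁)! : ℂ) * ((-1) ^ q₁ * z ^ q₂ * (1 - z) ^ p₂ *
        (((p₂ + q₂).choose k : ℂ) * ((p₂ + q₁).descFactorial k : ℂ) * (-1) ^ (p₂ + q₂ - k) *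
          (((p₁ + q₂).descFactorial (p₂ + q₂ - k)) : ℂ) * z ^ (p₂ + q₁ - k) *
          (1 - z) ^ (p₁ + k - p₂))) =
      (((p₁ + q₁)! * ((p₂ + q₂).choose k) * ((p₂ + q₁).descFactorial k) *
          ((p₁ + q₂).descFactorial (p₂ + q₂ - k)) : ℕ) : ℂ) *
        (-1) ^ (q₁ + (p₂ + q₂ - k)) * z ^ (q₂ + (p₂ + q₁ - k)) *
        (1 - z) ^ (p₂ + (p₁ + k - p₂)) := by
    rw [Nat.cast_mul, Nat.cast_mul, Nat.cast_mul, pow_add, pow_add, pow_add]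
    ring
  have R : ((p₁ + q₂)! : ℂ) * ((-1) ^ q₂ * z ^ q₁ * (1 - z) ^ p₂ *
        (((p₂ + q₁).choose k : ℂ) * ((p₂ + q₂).descFactorial k : ℂ) * (-1) ^ (p₂ + q₁ - k) *
          (((p₁ + q₁).descFactorial (p₂ + q₁ - k)) : ℂ) * z ^ (p₂ + q₂ - k) *
          (1 - z) ^ (p₁ + k - p₂))) =
      (((p₁ + q₂)! * ((p₂ + q₁).choose k) * ((p₂ + q₂).descFactorial k) *
          ((p₁ + q₁).descFactorial (p₂ + q₁ - k)) : ℕ) : ℂ) *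
        (-1) ^ (q₂ + (p₂ + q₁ - k)) * z ^ (q₁ + (p₂ + q₂ - k)) *
        (1 - z) ^ (p₂ + (p₁ + k - p₂)) := by
    rw [Nat.cast_mul, Nat.cast_mul, Nat.cast_mul, pow_add, pow_add, pow_add]
    ring
  rw [L, R, show q₂ + (p₂ + q₁ - k) = q₁ + (p₂ + q₂ - k) by omega,
    coeff_id p₁ q₁ p₂ q₂ k h1 h2 h3]
end
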